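/- Let ξ : [0, Y₀] → ℝ be a C² solution of ξ''(y) + (1/4)ξ'(y) − (1/(2y)) ξ(y) ξ'(y) = 0 on (0, Y₀) with ξ(0) = 0 and ξ'(0) = a, where 0 < a < 1/2. Then for all y ∈ (0, Y₀]: 0 < ξ'(y) < a, −1/8 < ξ''(y) < 0, and 0 < ξ(y) < a·y. -/

import Mathlib

/-- If ξ solves ξ'' + ξ'/4 - ξξ'/(2y) = 0 on (0,Y₀] with ξ(0) = 0, ξ'(0) = a,
0 < a < 1/2, then 0 < ξ'(y) < a, -1/8 < ξ''(y) < 0 and 0 < ξ(y) < a·y on (0,Y₀]. -/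
theorem profile_derivative_below_half (Y₀ a : ℝ) (hY₀ : 0 < Y₀)
    (ξ ξ' ξ'' : ℝ → ℝ)
    (hcont : ContinuousOn ξ (Set.Icc 0 Y₀))
    (hcont' : ContinuousOn ξ' (Set.Icc 0 Y₀))
    (hderiv0 : HasDerivWithinAt ξ (ξ' 0) (Set.Ici 0) 0)
    (hderiv : ∀ y ∈ Set.Ioc (0 : ℝ) Y₀, HasDerivAt ξ (ξ' y) y)
    (hderiv' : ∀ y ∈ Set.Ioc (0 : ℝ) Y₀, HasDerivAt ξ' (ξ'' y) y)
    (heq : ∀ y ∈ Set.Ioc (0 : ℝ) Y₀,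
      ξ'' y + (1 / 4) * ξ' y - (1 / (2 * y)) * ξ y * ξ' y = 0)
    (hξ0 : ξ 0 = 0) (ha : ξ' 0 = a) (ha0 : 0 < a) (hahalf : a < 1 / 2) :
    ∀ y ∈ Set.Ioc (0 : ℝ) Y₀,
      0 < ξ' y ∧ ξ' y < a ∧ -(1 / 8) < ξ'' y ∧ ξ'' y < 0 ∧ 0 < ξ y ∧ ξ y < a * y := by
  obtain ⟨c, hac, hc2⟩ : ∃ c : ℝ, a < c ∧ c < 1/2 := ⟨1/4 + a/2, by linarith, by linarith⟩
  have hc0 : 0 < c := ha0.trans hac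
  -- rearranged ODE
  have hode : ∀ t ∈ Set.Ioc (0:ℝ) Y₀, ξ'' t = ξ' t * (ξ t / (2*t) - 1/4) := by
    intro t ht
    have h := heq t ht
    have ht0 : (0:ℝ) < t := ht.1
    have h2 : ξ'' t = (1 / (2 * t)) * ξ t * ξ' t - (1/4) * ξ' t := by linarith
    rw [h2]; field_simp
  -- Key lemma A: bootstrap consequences
  have keyA : ∀ b ∈ Set.Ioc (0:ℝ) Y₀,
      (∀ t ∈ Set.Icc (0:ℝ) b, 0 ≤ ξ' t ∧ ξ t ≤ c * t) →
      ∀ t ∈ Set.Ioc (0:ℝ) b,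
        0 < ξ' t ∧ ξ' t < a ∧ -(1/8) < ξ'' t ∧ ξ'' t < 0 ∧ 0 < ξ t ∧ ξ t < a * t := by
    rintro b ⟨hb0, hbY⟩ H
    have hsub : Set.Icc (0:ℝ) b ⊆ Set.Icc 0 Y₀ := Set.Icc_subset_Icc le_rfl hbY
    have hmemIoc : ∀ t ∈ Set.Ioo (0:ℝ) b, t ∈ Set.Ioc (0:ℝ) Y₀ :=
      fun t ht => ⟨ht.1, ht.2.le.trans hbY⟩
    have hIooIcc : Set.Ioo (0:ℝ) b ⊆ Set.Icc 0 b := Set.Ioo_subset_Icc_self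
    have h0mem : (0:ℝ) ∈ Set.Icc (0:ℝ) b := ⟨le_rfl, hb0.le⟩
    -- ξ monotone hence nonneg
    have hmono : MonotoneOn ξ (Set.Icc 0 b) := by
      apply monotoneOn_of_hasDerivWithinAt_nonneg (f' := ξ') (convex_Icc _ _) (hcont.mono hsub)
      · intro t ht
        rw [interior_Icc] at ht ⊢
        exact (hderiv t (hmemIoc t ht)).hasDerivWithinAt
      · intro t ht
        rw [interior_Icc] at ht
        exact (H t (hIooIcc ht)).1
    have hξnn : ∀ t ∈ Set.Icc (0:ℝ) b, 0 ≤ ξ t := by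
      intro t ht
      have := hmono h0mem ht ht.1
      rwa [hξ0] at this
    -- g = exp(t/4) ξ' monotone, hence ξ' > 0
    have hgmono : MonotoneOn (fun t => Real.exp (t/4) * ξ' t) (Set.Icc 0 b) := by
      apply monotoneOn_of_hasDerivWithinAt_nonneg
        (f' := fun t => Real.exp (t/4) * (ξ'' t + (1/4) * ξ' t)) (convex_Icc _ _)
      · exact ((Real.continuous_exp.comp (continuous_id.div_const 4)).continuousOn.mul
          (hcont'.mono hsub))
      · intro t ht
        rw [interior_Icc] at ht ⊢
        have h1 : HasDerivAt (fun s => Real.exp (s/4)) (Real.exp (t/4) * (1/4)) t :=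
          ((hasDerivAt_id' t).div_const 4).exp
        have h2 := h1.mul (hderiv' t (hmemIoc t ht))
        have : Real.exp (t/4) * (1/4) * ξ' t + Real.exp (t/4) * ξ'' t
            = Real.exp (t/4) * (ξ'' t + (1/4) * ξ' t) := by ring
        rw [this] at h2
        exact h2.hasDerivWithinAt
      · intro t ht
        rw [interior_Icc] at ht
        have htY := hmemIoc t ht
        have heqt := heq t htY
        have hnn : 0 ≤ ξ'' t + (1/4) * ξ' t := by
          have h1 : ξ'' t + (1/4) * ξ' t = (1 / (2 * t)) * ξ t * ξ' t := by linarith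
          rw [h1]
          have e1 := hξnn t (hIooIcc ht)
          have e2 := (H t (hIooIcc ht)).1
          have e3 : (0:ℝ) ≤ 1 / (2 * t) := le_of_lt (div_pos one_pos (by linarith [ht.1]))
          exact mul_nonneg (mul_nonneg e3 e1) e2
        exact mul_nonneg (Real.exp_pos _).le hnn
    have hpos' : ∀ t ∈ Set.Icc (0:ℝ) b, 0 < ξ' t := by
      intro t ht
      have h1 := hgmono h0mem ht ht.1
      simp only [Real.exp_zero, zero_div, one_mul, ha] at h1
      nlinarith [Real.exp_pos (t/4)]
    -- ξ'' < 0 on Ioc 0 b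
    have hneg'' : ∀ t ∈ Set.Ioc (0:ℝ) b, ξ'' t < 0 := by
      rintro t ⟨ht0, htb⟩
      have htY : t ∈ Set.Ioc (0:ℝ) Y₀ := ⟨ht0, htb.trans hbY⟩
      rw [hode t htY]
      have hξle := (H t ⟨ht0.le, htb⟩).2
      have hfac : ξ t / (2*t) - 1/4 < 0 := by
        have h1 : ξ t / (2*t) ≤ c/2 := by
          rw [div_le_iff₀ (by linarith : (0:ℝ) < 2*t)]
          have h2 : c * t = c/2 * (2*t) := by ring
          linarith
        linarith
      exact mul_neg_of_pos_of_neg (hpos' t ⟨ht0.le, htb⟩) hfac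
    -- ξ' strictly decreasing, hence ξ' < a
    have hanti : StrictAntiOn ξ' (Set.Icc 0 b) := by
      apply strictAntiOn_of_deriv_neg (convex_Icc _ _) (hcont'.mono hsub)
      intro t ht
      rw [interior_Icc] at ht
      rw [(hderiv' t (hmemIoc t ht)).deriv]
      exact hneg'' t ⟨ht.1, ht.2.le⟩
    have hlta : ∀ t ∈ Set.Ioc (0:ℝ) b, ξ' t < a := by
      rintro t ⟨ht0, htb⟩
      have := hanti h0mem ⟨ht0.le, htb⟩ ht0
      rwa [ha] at this
    -- ξ > 0
    have hsm : StrictMonoOn ξ (Set.Icc 0 b) := by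
      apply strictMonoOn_of_deriv_pos (convex_Icc _ _) (hcont.mono hsub)
      intro t ht
      rw [interior_Icc] at ht
      rw [(hderiv t (hmemIoc t ht)).deriv]
      exact hpos' t (hIooIcc ht)
    have hξpos : ∀ t ∈ Set.Ioc (0:ℝ) b, 0 < ξ t := by
      rintro t ⟨ht0, htb⟩
      have := hsm h0mem ⟨ht0.le, htb⟩ ht0
      rwa [hξ0] at this
    -- ξ < a t
    have hφ : StrictMonoOn (fun t => a * t - ξ t) (Set.Icc 0 b) := by
      apply strictMonoOn_of_hasDerivWithinAt_pos (f' := fun t => a - ξ' t)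
        (convex_Icc _ _)
      · exact (continuous_const.mul continuous_id).continuousOn.sub (hcont.mono hsub)
      · intro t ht
        rw [interior_Icc] at ht ⊢
        have h1 := ((hasDerivAt_id t).const_mul a).sub (hderiv t (hmemIoc t ht))
        simp only [mul_one, id_eq] at h1
        exact h1.hasDerivWithinAt
      · intro t ht
        rw [interior_Icc] at ht
        have := hlta t ⟨ht.1, ht.2.le⟩
        linarith
    have hξlt : ∀ t ∈ Set.Ioc (0:ℝ) b, ξ t < a * t := by
      rintro t ⟨ht0, htb⟩
      have := hφ h0mem ⟨ht0.le, htb⟩ ht0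
      simp only [mul_zero, hξ0, sub_zero] at this
      linarith
    -- assemble
    rintro t ⟨ht0, htb⟩
    have htY : t ∈ Set.Ioc (0:ℝ) Y₀ := ⟨ht0, htb.trans hbY⟩
    have h1 := hpos' t ⟨ht0.le, htb⟩
    have h2 := hlta t ⟨ht0, htb⟩
    have h3 := hneg'' t ⟨ht0, htb⟩
    have h4 := hξpos t ⟨ht0, htb⟩
    have h5 := hξlt t ⟨ht0, htb⟩
    refine ⟨h1, h2, ?_, h3, h4, h5⟩
    -- ξ'' > -1/8
    have heqt := hode t htY
    have hnn : 0 ≤ ξ t / (2*t) := by positivity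
    have hkey : 0 ≤ ξ' t * (ξ t / (2*t)) := mul_nonneg h1.le hnn
    nlinarith
  -- Bootstrap: the property P holds on all of [0, Y₀]
  set P : ℝ → Prop := fun t => 0 ≤ ξ' t ∧ ξ t ≤ c * t with hPdef
  have hP0 : P 0 := ⟨by rw [ha]; exact ha0.le, by rw [hξ0]; simp⟩
  have hmain : ∀ t ∈ Set.Icc (0:ℝ) Y₀, P t := by
    by_contra hcon
    push_neg at hcon
    obtain ⟨t₀, ht₀, hPt₀⟩ := hcon
    set T := {t ∈ Set.Icc (0:ℝ) Y₀ | ¬ P t} with hTdef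
    have hTne : T.Nonempty := ⟨t₀, ht₀, hPt₀⟩
    have hTbdd : BddBelow T := ⟨0, fun t ht => ht.1.1⟩
    obtain ⟨b, hbdef⟩ : ∃ b : ℝ, sInf T = b := ⟨_, rfl⟩
    have hble : ∀ t ∈ T, b ≤ t := fun t ht => hbdef ▸ csInf_le hTbdd ht
    have hblt : ∀ x, b < x → ∃ t ∈ T, t < x := fun x hx =>
      exists_lt_of_csInf_lt hTne (hbdef ▸ hx)
    have hb0 : 0 ≤ b := hbdef ▸ le_csInf hTne fun t ht => ht.1.1
    have hbY : b ≤ Y₀ := (hble t₀ ⟨ht₀, hPt₀⟩).trans ht₀.2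
    have hbefore : ∀ t ∈ Set.Ico (0:ℝ) b, P t := by
      rintro t ⟨ht0, htb⟩
      by_contra h
      exact absurd (hble t ⟨⟨ht0, htb.le.trans hbY⟩, h⟩) (not_le.2 htb)
    -- P b
    have hPb : P b := by
      rcases eq_or_lt_of_le hb0 with h0 | h0
      · exact h0 ▸ hP0
      · -- limit from the left
        have hbcl : b ∈ closure (Set.Ico (0:ℝ) b) := by
          rw [closure_Ico h0.ne]; exact ⟨hb0, le_rfl⟩
        have hne : (nhdsWithin b (Set.Ico (0:ℝ) b)).NeBot :=
          mem_closure_iff_nhdsWithin_neBot.1 hbcl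
        have hsub2 : Set.Ico (0:ℝ) b ⊆ Set.Icc 0 Y₀ := fun t ht =>
          ⟨ht.1, ht.2.le.trans hbY⟩
        have ht1 : Filter.Tendsto ξ' (nhdsWithin b (Set.Ico (0:ℝ) b)) (nhds (ξ' b)) :=
          (hcont'.continuousWithinAt ⟨hb0, hbY⟩).mono hsub2
        have ht2 : Filter.Tendsto (fun t => c * t - ξ t)
            (nhdsWithin b (Set.Ico (0:ℝ) b)) (nhds (c * b - ξ b)) := by
          have : ContinuousWithinAt (fun t => c * t - ξ t) (Set.Icc 0 Y₀) b :=
            ((continuous_const.mul continuous_id).continuousOn.sub hcont).continuousWithinAt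
              ⟨hb0, hbY⟩
          exact this.mono hsub2
        constructor
        · exact ge_of_tendsto ht1 ((eventually_mem_nhdsWithin).mono fun t ht =>
            (hbefore t ht).1)
        · have h2 : (0:ℝ) ≤ c * b - ξ b :=
            ge_of_tendsto ht2 ((eventually_mem_nhdsWithin).mono fun t ht => by
              have := (hbefore t ht).2
              show (0:ℝ) ≤ c * t - ξ t
              linarith)
          linarith
    have hbT : b ∉ T := fun h => h.2 hPb
    -- find δ > 0 such that P holds on points of [0,Y₀] below b + δ
    have hext : ∃ δ > 0, ∀ t, b < t → t < b + δ → t ≤ Y₀ → P t := by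
      rcases eq_or_lt_of_le hb0 with h0 | h0
      · -- b = 0 : use continuity of ξ' at 0 and the derivative of ξ at 0
        rw [← h0]
        have hev1 : ∀ᶠ t in nhdsWithin 0 (Set.Icc (0:ℝ) Y₀), 0 < ξ' t := by
          have := (hcont'.continuousWithinAt (⟨le_rfl, hY₀.le⟩ : (0:ℝ) ∈ Set.Icc 0 Y₀))
          have := this.eventually (p := fun x => 0 < x) ?_
          · exact this
          · rw [ha]; exact eventually_gt_nhds ha0
        have hev2 : ∀ᶠ t in nhdsWithin 0 (Set.Ici (0:ℝ) \ {0}), ξ t / t < c := by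
          have hs := hasDerivWithinAt_iff_tendsto_slope.1 hderiv0
          rw [ha] at hs
          have : ∀ᶠ x in nhdsWithin 0 (Set.Ici (0:ℝ) \ {0}), slope ξ 0 x < c :=
            hs.eventually (eventually_lt_nhds hac)
          refine this.mono fun t ht => ?_
          rwa [slope_def_field, hξ0, sub_zero, sub_zero] at ht
        rw [eventually_nhdsWithin_iff, Metric.eventually_nhds_iff] at hev1 hev2
        obtain ⟨ε₁, hε₁, h1⟩ := hev1
        obtain ⟨ε₂, hε₂, h2⟩ := hev2
        refine ⟨min ε₁ ε₂, lt_min hε₁ hε₂, fun t ht0 htδ htY => ?_⟩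
        rw [zero_add] at htδ
        have hd : dist t 0 < min ε₁ ε₂ := by
          rw [Real.dist_eq, sub_zero, abs_of_pos ht0]; exact htδ
        have q1 := h1 (hd.trans_le (min_le_left _ _)) ⟨ht0.le, htY⟩
        have q2 := h2 (hd.trans_le (min_le_right _ _)) ⟨ht0.le, by simp [ht0.ne']⟩
        refine ⟨q1.le, ?_⟩
        rw [div_lt_iff₀ ht0] at q2
        linarith [q2]
      · -- b > 0 : use keyA at b and continuity at b
        have hbY' : b < Y₀ := by
          rcases eq_or_lt_of_le hbY with h | h
          · exfalso
            obtain ⟨t, htT, htlt⟩ := hblt _ (lt_add_of_pos_right b one_pos)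
            have h1 : b ≤ t := hble t htT
            rcases eq_or_lt_of_le h1 with rfl | h2
            · exact hbT htT
            · exact absurd htT.1.2 (not_le.2 (h ▸ h2))
          · exact h
        have hH : ∀ t ∈ Set.Icc (0:ℝ) b, 0 ≤ ξ' t ∧ ξ t ≤ c * t := by
          rintro t ⟨ht0, htb⟩
          rcases eq_or_lt_of_le htb with rfl | h
          · exact hPb
          · exact hbefore t ⟨ht0, h⟩
        have hAb := keyA b ⟨h0, hbY⟩ hH b ⟨h0, le_rfl⟩
        have hξ'b : 0 < ξ' b := hAb.1
        have hξb : ξ b < c * b := by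
          have h1 := hAb.2.2.2.2.2
          nlinarith [mul_pos (by linarith : (0:ℝ) < c - a) h0]
        have hev1 : ∀ᶠ t in nhdsWithin b (Set.Icc (0:ℝ) Y₀), 0 < ξ' t :=
          (hcont'.continuousWithinAt ⟨hb0, hbY⟩).eventually (eventually_gt_nhds hξ'b)
        have hev2 : ∀ᶠ t in nhdsWithin b (Set.Icc (0:ℝ) Y₀), ξ t < c * t := by
          have hc2 : ContinuousWithinAt (fun t => c * t - ξ t) (Set.Icc 0 Y₀) b :=
            ((continuous_const.mul continuous_id).continuousOn.sub hcont).continuousWithinAt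
              ⟨hb0, hbY⟩
          have := hc2.eventually (p := fun x => 0 < x)
            (eventually_gt_nhds (by simp only []; linarith))
          exact this.mono fun t ht => by simpa using ht
        have hev := hev1.and hev2
        rw [eventually_nhdsWithin_iff, Metric.eventually_nhds_iff] at hev
        obtain ⟨ε, hε, h1⟩ := hev
        refine ⟨ε, hε, fun t ht0 htδ htY => ?_⟩
        have hd : dist t b < ε := by
          rw [Real.dist_eq, abs_of_pos (by linarith)]; linarith
        have q := h1 hd ⟨hb0.trans ht0.le, htY⟩
        exact ⟨q.1.le, q.2.le⟩
    obtain ⟨δ, hδ, hPδ⟩ := hext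
    obtain ⟨t, htT, htlt⟩ := hblt _ (lt_add_of_pos_right b hδ)
    have h1 : b ≤ t := hble t htT
    rcases eq_or_lt_of_le h1 with rfl | h2
    · exact hbT htT
    · exact htT.2 (hPδ t h2 htlt htT.1.2)
  intro y hy
  exact keyA Y₀ ⟨hY₀, le_rfl⟩ (fun t ht => hmain t ht) y hy
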